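/- The curve z(t) = x(t) + i y(t) with x(t) = cos(t/2)/√(2 cos t), y(t) = sin(t/2)/√(2 cos t) is a solution of the complex ODE z' = i z (1 − z²) on the interval (−π/2, π/2). -/

import Mathlib

open Real Complex

theorem separatrix_solves_complex_ode :
    ∀ t : ℝ, -(π / 2) < t → t < π / 2 →
      HasDerivAt
        (fun s : ℝ =>
          (Real.cos (s / 2) / Real.sqrt (2 * Real.cos s) : ℂ) +
            Complex.I * (Real.sin (s / 2) / Real.sqrt (2 * Real.cos s) : ℝ))
        (Complex.I *
            ((Real.cos (t / 2) / Real.sqrt (2 * Real.cos t) : ℂ) +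
              Complex.I * (Real.sin (t / 2) / Real.sqrt (2 * Real.cos t) : ℝ)) *
          (1 -
            ((Real.cos (t / 2) / Real.sqrt (2 * Real.cos t) : ℂ) +
              Complex.I * (Real.sin (t / 2) / Real.sqrt (2 * Real.cos t) : ℝ)) ^ 2))
        t := by
  intro t ht1 ht2
  have hc : 0 < Real.cos t := Real.cos_pos_of_mem_Ioo ⟨ht1, ht2⟩
  have hr : 0 < Real.sqrt (2 * Real.cos t) := Real.sqrt_pos.mpr (by linarith)
  have hr2 : Real.sqrt (2 * Real.cos t) ^ 2 = 2 * Real.cos t := Real.sq_sqrt (by linarith)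
  have hhalf : HasDerivAt (fun s : ℝ => s / 2) (1 / 2) t := by
    simpa using (hasDerivAt_id t).div_const 2
  have hnum : HasDerivAt (fun s : ℝ => Real.cos (s / 2)) (-Real.sin (t / 2) * (1 / 2)) t :=
    by have := (Real.hasDerivAt_cos (t / 2)).comp t hhalf; exact this
  have hnum' : HasDerivAt (fun s : ℝ => Real.sin (s / 2)) (Real.cos (t / 2) * (1 / 2)) t :=
    by have := (Real.hasDerivAt_sin (t / 2)).comp t hhalf; exact this
  have hinner : HasDerivAt (fun s : ℝ => 2 * Real.cos s) (2 * -Real.sin t) t :=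
    (Real.hasDerivAt_cos t).const_mul 2
  have hden : HasDerivAt (fun s : ℝ => Real.sqrt (2 * Real.cos s))
      (2 * -Real.sin t / (2 * Real.sqrt (2 * Real.cos t))) t :=
    hinner.sqrt (by positivity)
  have hdenC : HasDerivAt (fun s : ℝ => (Real.sqrt (2 * Real.cos s) : ℂ))
      ((2 * -Real.sin t / (2 * Real.sqrt (2 * Real.cos t)) : ℝ) : ℂ) t := hden.ofReal_comp
  have hnumC : HasDerivAt (fun s : ℝ => (Real.cos (s / 2) : ℂ))
      ((-Real.sin (t / 2) * (1 / 2) : ℝ) : ℂ) t := hnum.ofReal_comp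
  have hX : HasDerivAt (fun s : ℝ => ((Real.cos (s / 2) : ℂ) / (Real.sqrt (2 * Real.cos s) : ℂ)))
      ((((-Real.sin (t / 2) * (1 / 2) : ℝ) : ℂ) * (Real.sqrt (2 * Real.cos t) : ℂ) -
        (Real.cos (t / 2) : ℂ) * ((2 * -Real.sin t / (2 * Real.sqrt (2 * Real.cos t)) : ℝ) : ℂ)) /
        ((Real.sqrt (2 * Real.cos t) : ℂ) ^ 2)) t :=
    hnumC.div hdenC (by exact_mod_cast hr.ne')
  have hy : HasDerivAt (fun s : ℝ => Real.sin (s / 2) / Real.sqrt (2 * Real.cos s))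
      ((Real.cos (t / 2) * (1 / 2) * Real.sqrt (2 * Real.cos t) -
        Real.sin (t / 2) * (2 * -Real.sin t / (2 * Real.sqrt (2 * Real.cos t)))) /
        Real.sqrt (2 * Real.cos t) ^ 2) t :=
    hnum'.div hden hr.ne'
  have hY := (hy.ofReal_comp).const_mul Complex.I
  have h := hX.add hY
  convert h using 1
  · rfl
  · rfl
  have hs : Real.sin t = 2 * Real.sin (t / 2) * Real.cos (t / 2) := by
    rw [← Real.sin_two_mul]; congr 1; ring
  have hct : Real.cos t = 2 * Real.cos (t / 2) ^ 2 - 1 := by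
    rw [← Real.cos_two_mul]; congr 1; ring
  have hpy : Real.sin (t / 2) ^ 2 + Real.cos (t / 2) ^ 2 = 1 := Real.sin_sq_add_cos_sq _
  set S := Real.sin (t / 2) with hS
  set C := Real.cos (t / 2) with hC
  set R := Real.sqrt (2 * Real.cos t) with hR
  rw [hs]
  have hr2' : (R : ℂ) ^ 2 = 2 * (2 * (C : ℂ) ^ 2 - 1) := by
    rw_mod_cast [hr2, hct]
  have hpyC : (S : ℂ) ^ 2 + (C : ℂ) ^ 2 = 1 := by exact_mod_cast hpy
  have hrC : (R : ℂ) ≠ 0 := by exact_mod_cast hr.ne'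
  push_cast
  field_simp
  ring_nf
  have hI : (Complex.I) ^ 2 = -1 := Complex.I_sq
  linear_combination ((I:ℂ) * C - S) * hr2' + ((2:ℂ) * I * C - 2 * S) * hpyC +
    ((2:ℂ) * S * R ^ 2 - 6 * C ^ 2 * S - 6 * I * C * S ^ 2 - 2 * (I ^ 2 - 1) * S ^ 3) * hI
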